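/- Let k be a field of characteristic 2, n ≥ 1, and λ ∈ k. Consider the representation N_{2n,λ} of the Klein four group G = ⟨σ, τ⟩ on k^{2n}, where σ acts as I_{2n} + E(I_n) and τ acts as I_{2n} + E(J_n(λ)). Write u := E(I_n) (the action of σ − 1) and w := E(J_n(λ)) (the action of τ − 1). Then: (i) u·w = 0 (i.e., (σ−1)(τ−1) acts as zero); (ii) dim_k (ker u ∩ ker w) = n; and (iii) for every (a, b) ∈ k × k with (a, b) ≠ (0, 0), dim_k ker(a·u + b·w) = n + 1 if a = λ·b, and dim_k ker(a·u + b·w) = n otherwise. -/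

import Mathlib

/-- The `n × n` upper-triangular Jordan block with eigenvalue `lam`. -/
def jordanBlock (k : Type*) [Zero k] [One k] (n : ℕ) (lam : k) :
    Matrix (Fin n) (Fin n) k :=
  Matrix.of fun i j => if (j : ℕ) = (i : ℕ) then lam
    else if (j : ℕ) = (i : ℕ) + 1 then 1 else 0

/-- The `2n × 2n` block matrix `[[0, X], [0, 0]]`. -/
def eBlock (k : Type*) [Zero k] (n : ℕ) (X : Matrix (Fin n) (Fin n) k) :
    Matrix (Fin n ⊕ Fin n) (Fin n ⊕ Fin n) k :=
  Matrix.fromBlocks 0 X 0 0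

open scoped Classical

section Aux

open Matrix

variable {k : Type*} [Field k] {n : ℕ}

lemma eBlock_mulVec (X : Matrix (Fin n) (Fin n) k) (v : Fin n ⊕ Fin n → k) :
    eBlock k n X *ᵥ v = Sum.elim (X *ᵥ (v ∘ Sum.inr)) 0 := by
  conv_lhs => rw [← Sum.elim_comp_inl_inr v]
  rw [eBlock, Matrix.fromBlocks_mulVec]
  simp

lemma mem_ker_eBlock {X : Matrix (Fin n) (Fin n) k} {v : Fin n ⊕ Fin n → k} :
    v ∈ LinearMap.ker (Matrix.mulVecLin (eBlock k n X)) ↔ X *ᵥ (v ∘ Sum.inr) = 0 := by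
  rw [LinearMap.mem_ker, Matrix.mulVecLin_apply, eBlock_mulVec]
  constructor
  · intro h
    funext i
    exact congrFun h (Sum.inl i)
  · intro h
    rw [h]
    funext x
    cases x <;> rfl

/-- The kernel of `mulVecLin (eBlock X)` splits as `(Fin n → k) × ker (mulVecLin X)`. -/
noncomputable def kerEBlockEquiv (X : Matrix (Fin n) (Fin n) k) :
    LinearMap.ker (Matrix.mulVecLin (eBlock k n X)) ≃ₗ[k]
      (Fin n → k) × LinearMap.ker (Matrix.mulVecLin X) where
  toFun v := (fun i => v.1 (Sum.inl i), ⟨fun i => v.1 (Sum.inr i), by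
    have h := mem_ker_eBlock.1 v.2
    simpa [LinearMap.mem_ker, Function.comp_def] using h⟩)
  map_add' v w := rfl
  map_smul' c v := rfl
  invFun p := ⟨Sum.elim p.1 p.2.1, mem_ker_eBlock.2 p.2.2⟩
  left_inv v := by
    apply Subtype.ext
    funext x
    cases x <;> rfl
  right_inv p := by
    apply Prod.ext
    · rfl
    · apply Subtype.ext; rfl

lemma finrank_ker_eBlock (X : Matrix (Fin n) (Fin n) k) :
    Module.finrank k (LinearMap.ker (Matrix.mulVecLin (eBlock k n X)))
      = n + Module.finrank k (LinearMap.ker (Matrix.mulVecLin X)) := by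
  rw [(kerEBlockEquiv X).finrank_eq, Module.finrank_prod, Module.finrank_pi]
  simp

lemma smul_mulVecLin {m : Type*} [Fintype m] (a : k) (M : Matrix m m k) :
    a • Matrix.mulVecLin M = Matrix.mulVecLin (a • M) := by
  ext v i
  simp [Matrix.smul_mulVec]

lemma eBlock_smul (a : k) (X : Matrix (Fin n) (Fin n) k) :
    a • eBlock k n X = eBlock k n (a • X) := by
  ext i j
  cases i <;> cases j <;> simp [eBlock]

lemma eBlock_add (X Y : Matrix (Fin n) (Fin n) k) :
    eBlock k n X + eBlock k n Y = eBlock k n (X + Y) := by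
  ext i j
  cases i <;> cases j <;> simp [eBlock]

lemma jordanBlock_zero_apply (i j : Fin n) :
    jordanBlock k n 0 i j = if (j : ℕ) = (i : ℕ) + 1 then 1 else 0 := by
  simp only [jordanBlock, Matrix.of_apply]
  split_ifs with h1 h2 <;> first | rfl | omega

lemma jordanBlock_zero_mulVec (y : Fin n → k) (i j : Fin n) (hj : (j : ℕ) = (i : ℕ) + 1) :
    (jordanBlock k n 0 *ᵥ y) i = y j := by
  simp only [Matrix.mulVec, dotProduct]
  rw [Finset.sum_eq_single j]
  · rw [jordanBlock_zero_apply, if_pos hj, one_mul]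
  · intro b _ hb
    rw [jordanBlock_zero_apply, if_neg, zero_mul]
    intro hb'
    exact hb (Fin.ext (hb'.trans hj.symm))
  · intro h
    exact absurd (Finset.mem_univ j) h

lemma finrank_ker_jordanBlock_zero (hn : 1 ≤ n) :
    Module.finrank k (LinearMap.ker (Matrix.mulVecLin (jordanBlock k n 0))) = 1 := by
  set i0 : Fin n := ⟨0, hn⟩ with hi0
  have hne : (Pi.single i0 1 : Fin n → k) ≠ 0 := by
    intro h
    have := congrFun h i0
    simp at this
  have hker : LinearMap.ker (Matrix.mulVecLin (jordanBlock k n 0))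
      = Submodule.span k {(Pi.single i0 1 : Fin n → k)} := by
    apply le_antisymm
    · intro y hy
      have hy' : ∀ i : Fin n, (jordanBlock k n 0 *ᵥ y) i = 0 := fun i =>
        congrFun ((LinearMap.mem_ker.1 hy : jordanBlock k n 0 *ᵥ y = 0)) i
      have : y = y i0 • (Pi.single i0 1 : Fin n → k) := by
        funext j
        by_cases hj : j = i0
        · subst hj; simp
        · have hj0 : (j : ℕ) ≠ 0 := by
            intro h; exact hj (Fin.ext h)
          have hlt : (j : ℕ) - 1 < n := by omega
          have : y j = 0 := by
            rw [← jordanBlock_zero_mulVec y ⟨(j : ℕ) - 1, hlt⟩ j (by simp; omega)]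
            exact hy' _
          simp [this, Pi.single_apply, hj]
      rw [this]
      exact Submodule.smul_mem _ _ (Submodule.mem_span_singleton_self _)
    · rw [Submodule.span_le, Set.singleton_subset_iff]
      rw [SetLike.mem_coe, LinearMap.mem_ker, Matrix.mulVecLin_apply]
      funext i
      simp only [Matrix.mulVec_single, Pi.zero_apply, mul_one, MulOpposite.op_one, one_smul,
        Matrix.col_apply]
      rw [jordanBlock_zero_apply, if_neg (by simp only [hi0]; omega)]
  rw [hker]
  exact finrank_span_singleton hne

end Aux

/-- For the Klein four representation `N_{2n,λ}` with `u = E(Iₙ)` the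
action of `σ − 1` and `w = E(Jₙ(λ))` the action of `τ − 1`:
(i) `u·w = 0`; (ii) `dim (ker u ∩ ker w) = n`; (iii) for `(a, b) ≠ (0, 0)`,
`dim ker(a·u + b·w) = n + 1` if `a = λ·b`, and `= n` otherwise. -/
theorem klein_four_N2n_kernel_dims
    (k : Type*) [Field k] (hchar : CharP k 2) (n : ℕ) (hn : 1 ≤ n) (lam : k) :
    (Matrix.mulVecLin (eBlock k n 1)) ∘ₗ
        (Matrix.mulVecLin (eBlock k n (jordanBlock k n lam))) = 0 ∧
    Module.finrank k
        ↥(LinearMap.ker (Matrix.mulVecLin (eBlock k n 1)) ⊓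
          LinearMap.ker (Matrix.mulVecLin (eBlock k n (jordanBlock k n lam)))) = n ∧
    (∀ a b : k, (a, b) ≠ (0, 0) →
      Module.finrank k
          ↥(LinearMap.ker
              (a • Matrix.mulVecLin (eBlock k n 1)
                + b • Matrix.mulVecLin (eBlock k n (jordanBlock k n lam))))
        = if a = lam * b then n + 1 else n) := by
  haveI := hchar
  refine ⟨?_, ?_, ?_⟩
  · -- (i) u ∘ w = 0
    rw [← Matrix.mulVecLin_mul]
    have : eBlock k n 1 * eBlock k n (jordanBlock k n lam) = 0 := by
      simp [eBlock, Matrix.fromBlocks_multiply]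
    rw [this, Matrix.mulVecLin_zero]
  · -- (ii)
    have hle : LinearMap.ker (Matrix.mulVecLin (eBlock k n (1 : Matrix (Fin n) (Fin n) k)))
        ≤ LinearMap.ker (Matrix.mulVecLin (eBlock k n (jordanBlock k n lam))) := by
      intro v hv
      rw [mem_ker_eBlock] at hv ⊢
      have : v ∘ Sum.inr = 0 := by simpa using hv
      rw [this, Matrix.mulVec_zero]
    rw [inf_eq_left.2 hle, finrank_ker_eBlock]
    simp
  · -- (iii)
    intro a b hab
    rw [smul_mulVecLin, smul_mulVecLin, ← Matrix.mulVecLin_add, eBlock_smul, eBlock_smul,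
      eBlock_add, finrank_ker_eBlock]
    by_cases hcase : a = lam * b
    · -- diagonal vanishes; matrix is b • shift
      have hb : b ≠ 0 := by
        intro hb0
        apply hab
        rw [hb0] at hcase ⊢
        simp [hcase]
      have hM : a • (1 : Matrix (Fin n) (Fin n) k) + b • jordanBlock k n lam
          = b • jordanBlock k n 0 := by
        ext i j
        simp only [Matrix.add_apply, Matrix.smul_apply, Matrix.one_apply, jordanBlock,
          Matrix.of_apply, smul_eq_mul]
        by_cases h1 : (j : ℕ) = (i : ℕ)
        · have hij : i = j := Fin.ext h1.symm
          rw [if_pos hij, if_pos h1, if_pos h1, hcase]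
          have h2 : lam * b + lam * b = 0 := CharTwo.add_self_eq_zero _
          linear_combination h2
        · have hij : ¬ i = j := fun h => h1 (by rw [h])
          rw [if_neg hij, if_neg h1, if_neg h1]
          ring
      rw [hM, ← smul_mulVecLin, LinearMap.ker_smul _ _ hb,
        finrank_ker_jordanBlock_zero hn, if_pos hcase]
    · -- invertible upper-triangular matrix
      rw [if_neg hcase]
      have hd : a + b * lam ≠ 0 := by
        intro h
        apply hcase
        have : a = -(b * lam) := eq_neg_of_add_eq_zero_left h
        rw [CharTwo.neg_eq] at this
        rw [this]; ring
      set M := a • (1 : Matrix (Fin n) (Fin n) k) + b • jordanBlock k n lam with hMdef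
      have htri : M.BlockTriangular id := by
        intro i j hij
        have hij' : (j : ℕ) < (i : ℕ) := hij
        simp only [hMdef, Matrix.add_apply, Matrix.smul_apply, Matrix.one_apply, jordanBlock,
          Matrix.of_apply, smul_eq_mul]
        rw [if_neg (by intro h; omega), if_neg (by omega), if_neg (by omega)]
        ring
      have hdiag : ∀ i : Fin n, M i i = a + b * lam := by
        intro i
        simp [hMdef, Matrix.one_apply, jordanBlock]
      have hdet : M.det = (a + b * lam) ^ n := by
        rw [Matrix.det_of_upperTriangular htri]
        simp [hdiag]
      have hunit : IsUnit M := by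
        rw [Matrix.isUnit_iff_isUnit_det, hdet]
        exact (IsUnit.pow n (Ne.isUnit hd))
      have hker : LinearMap.ker (Matrix.mulVecLin M) = ⊥ := by
        rw [LinearMap.ker_eq_bot, Matrix.coe_mulVecLin]
        exact Matrix.mulVec_injective_iff_isUnit.2 hunit
      rw [hker]
      simp
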